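/- Let Γ be a strictly Deza graph with parameters (n, k, b, a) with k = b + 1 and β(v) > 1 for every vertex v, and let β denote the common value of β(v). (1) If Γ contains a vertex of type (A1) or a vertex of type (C), then β + 1 divides k − 1. (2) If Γ contains a vertex of type (A2) or a vertex of type (B), then β + 1 divides k − β. -/

import Mathlib

open Finset SimpleGraph

universe u v

/-- The number of common neighbours of two vertices. -/
def commonNbrs {V : Type u} [Fintype V] [DecidableEq V] (G : SimpleGraph V)
    [DecidableRel G.Adj] (x y : V) : ℕ :=
  (G.neighborFinset x ∩ G.neighborFinset y).card

/-- `G` is a Deza graph with parameters `(n, k, b, a)`: a nonempty `k`-regular graph on `n`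
vertices in which any two distinct vertices have either `b` or `a` common neighbours,
where `b ≥ a`. -/
def IsDezaGraph {V : Type u} [Fintype V] [DecidableEq V] (G : SimpleGraph V)
    [DecidableRel G.Adj] (n k b a : ℕ) : Prop :=
  G ≠ ⊥ ∧ Fintype.card V = n ∧ G.IsRegularOfDegree k ∧ a ≤ b ∧
    ∀ x y : V, x ≠ y → commonNbrs G x y = b ∨ commonNbrs G x y = a

/-- `G` is a strictly Deza graph with parameters `(n, k, b, a)`: a Deza graph of
diameter 2 that is not strongly regular. -/
def IsStrictlyDezaGraph {V : Type u} [Fintype V] [DecidableEq V] (G : SimpleGraph V)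
    [DecidableRel G.Adj] (n k b a : ℕ) : Prop :=
  IsDezaGraph G n k b a ∧ G.Connected ∧ (∀ x y : V, G.dist x y ≤ 2) ∧
    (∃ x y : V, G.dist x y = 2) ∧ ¬ ∃ ℓ μ : ℕ, G.IsSRGWith n k ℓ μ

/-- `B(v)`: the set of vertices `u ≠ v` having exactly `b` common neighbours with `v`. -/
def dezaB {V : Type u} [Fintype V] [DecidableEq V] (G : SimpleGraph V)
    [DecidableRel G.Adj] (b : ℕ) (v : V) : Finset V :=
  univ.filter fun u => u ≠ v ∧ commonNbrs G u v = b

/-- `A(v)`: the set of vertices `u ≠ v` having exactly `a` common neighbours with `v`. -/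
def dezaA {V : Type u} [Fintype V] [DecidableEq V] (G : SimpleGraph V)
    [DecidableRel G.Adj] (a : ℕ) (v : V) : Finset V :=
  univ.filter fun u => u ≠ v ∧ commonNbrs G u v = a

/-- `B[v] = B(v) ∪ {v}`. -/
def dezaBc {V : Type u} [Fintype V] [DecidableEq V] (G : SimpleGraph V)
    [DecidableRel G.Adj] (b : ℕ) (v : V) : Finset V :=
  insert v (dezaB G b v)

/-- A vertex `v` is of type (A) if `B(v) ∩ N(v) = ∅`. -/
def IsTypeA {V : Type u} [Fintype V] [DecidableEq V] (G : SimpleGraph V)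
    [DecidableRel G.Adj] (b : ℕ) (v : V) : Prop :=
  dezaB G b v ∩ G.neighborFinset v = ∅

/-- A vertex `v` is of type (B) if `B(v) ⊆ N(v)`. -/
def IsTypeB {V : Type u} [Fintype V] [DecidableEq V] (G : SimpleGraph V)
    [DecidableRel G.Adj] (b : ℕ) (v : V) : Prop :=
  dezaB G b v ⊆ G.neighborFinset v

/-- A vertex `v` is of type (C) if `|B(v) ∩ N(v)| = 1`. -/
def IsTypeC {V : Type u} [Fintype V] [DecidableEq V] (G : SimpleGraph V)
    [DecidableRel G.Adj] (b : ℕ) (v : V) : Prop :=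
  (dezaB G b v ∩ G.neighborFinset v).card = 1

/-- A vertex `x` of type (A) is of type (A1) if there exists `y ∈ N(x)` with
`N(x) \ N(xᵢ) = {y}` for every `xᵢ ∈ B(x)`. -/
def IsTypeA1 {V : Type u} [Fintype V] [DecidableEq V] (G : SimpleGraph V)
    [DecidableRel G.Adj] (b : ℕ) (x : V) : Prop :=
  IsTypeA G b x ∧ ∃ y ∈ G.neighborFinset x,
    ∀ xi ∈ dezaB G b x, G.neighborFinset x \ G.neighborFinset xi = {y}

/-- A vertex `x` of type (A) is of type (A2) if there exists `z ∉ N[x]` with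
`N(xᵢ) \ N(x) = {z}` for every `xᵢ ∈ B(x)`. -/
def IsTypeA2 {V : Type u} [Fintype V] [DecidableEq V] (G : SimpleGraph V)
    [DecidableRel G.Adj] (b : ℕ) (x : V) : Prop :=
  IsTypeA G b x ∧ ∃ z ∉ insert x (G.neighborFinset x),
    ∀ xi ∈ dezaB G b x, G.neighborFinset xi \ G.neighborFinset x = {z}

/-- The complete multipartite graph with `m` parts of size `t`. -/
def completeMultipartiteGr (m t : ℕ) : SimpleGraph (Fin m × Fin t) where
  Adj u v := u.1 ≠ v.1
  symm := ⟨fun _ _ h => Ne.symm h⟩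
  loopless := ⟨fun _ h => h rfl⟩

/-- The 2-clique extension of a graph `H`: vertices `(u, i)` and `(v, j)` are adjacent
iff `u ~ v` in `H`, or `u = v` and `i ≠ j`. -/
def cliqueExt2 {W : Type v} (H : SimpleGraph W) : SimpleGraph (W × Fin 2) where
  Adj u v := H.Adj u.1 v.1 ∨ (u.1 = v.1 ∧ u.2 ≠ v.2)
  symm := by
    constructor
    intro u v h
    rcases h with h | ⟨h1, h2⟩
    · exact Or.inl h.symm
    · exact Or.inr ⟨h1.symm, h2.symm⟩
  loopless := by
    constructor
    intro u h
    rcases h with h | ⟨_, h2⟩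
    · exact H.loopless.irrefl _ h
    · exact h2 rfl

set_option linter.unusedSectionVars false
set_option maxHeartbeats 1000000

section Base

variable {V : Type u} [Fintype V] [DecidableEq V] {G : SimpleGraph V} [DecidableRel G.Adj]
variable {k b a β : ℕ}

lemma nbr_comm {u w : V} : u ∈ G.neighborFinset w ↔ w ∈ G.neighborFinset u := by
  rw [mem_neighborFinset, mem_neighborFinset, G.adj_comm]

lemma nbr_self (w : V) : w ∉ G.neighborFinset w := by
  rw [mem_neighborFinset]; exact G.irrefl

lemma mem_dezaB {u x : V} : u ∈ dezaB G b x ↔ u ≠ x ∧ commonNbrs G u x = b := by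
  unfold dezaB; simp

lemma common_comm (x y : V) : commonNbrs G x y = commonNbrs G y x := by
  unfold commonNbrs; rw [inter_comm]

lemma dezaB_symm {u x : V} (h : u ∈ dezaB G b x) : x ∈ dezaB G b u := by
  rw [mem_dezaB] at h ⊢
  exact ⟨h.1.symm, (common_comm x u).trans h.2⟩

lemma not_mem_dezaB_self (x : V) : x ∉ dezaB G b x := by
  rw [mem_dezaB]; tauto

section Ctx

variable (hreg : ∀ v : V, (G.neighborFinset v).card = k)
  (hdich : ∀ x y : V, x ≠ y → commonNbrs G x y = b ∨ commonNbrs G x y = a)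
  (hb : b + 1 = k) (hab : a ≤ b)

include hreg hdich hb hab

/-- distinct vertices have distinct neighbourhoods -/
lemma nbhd_inj {x y : V} (hne : x ≠ y)
    (h : G.neighborFinset x = G.neighborFinset y) : False := by
  have hc : commonNbrs G x y = k := by
    unfold commonNbrs; rw [h, inter_self, hreg]
  rcases hdich x y hne with h' | h' <;> omega

/-- common ≠ b gives common = a -/
lemma common_eq_a {s m : V} (hne : s ≠ m) (h : s ∉ dezaB G b m) :
    commonNbrs G s m = a := by
  rcases hdich s m hne with h' | h'
  · exact absurd (mem_dezaB.mpr ⟨hne, h'⟩) h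
  · exact h'

/-- adjacent b-pair: equal closed neighbourhoods -/
lemma closed_eq {w w' : V} (h : w' ∈ dezaB G b w) (hadj : w' ∈ G.neighborFinset w) :
    G.neighborFinset w' = insert w ((G.neighborFinset w).erase w') := by
  obtain ⟨hne, hcom⟩ := mem_dezaB.mp h
  have h1 : G.neighborFinset w' ∩ G.neighborFinset w ⊆ (G.neighborFinset w).erase w' := by
    intro u hu
    rw [mem_inter] at hu
    exact mem_erase.mpr ⟨fun he => (nbr_self w') (he ▸ hu.1), hu.2⟩
  have hce : ((G.neighborFinset w).erase w').card = k - 1 := by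
    rw [card_erase_of_mem hadj, hreg]
  have heq : G.neighborFinset w' ∩ G.neighborFinset w = (G.neighborFinset w).erase w' := by
    apply eq_of_subset_of_card_le h1
    have : (G.neighborFinset w' ∩ G.neighborFinset w).card = b := hcom
    omega
  have hw : w ∈ G.neighborFinset w' := nbr_comm.mp hadj
  have hsub : insert w ((G.neighborFinset w).erase w') ⊆ G.neighborFinset w' := by
    intro u hu
    rcases mem_insert.mp hu with rfl | hu
    · exact hw
    · rw [← heq] at hu; exact (mem_inter.mp hu).1
  symm
  apply eq_of_subset_of_card_le hsub
  rw [card_insert_of_notMem (fun hc => nbr_self w (mem_of_mem_erase hc)), hce, hreg]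
  omega

/-- nonadjacent b-pair: swap description -/
lemma swap_pair {w w' : V} (h : w' ∈ dezaB G b w) (hnadj : w' ∉ G.neighborFinset w) :
    ∃ p q : V, p ∈ G.neighborFinset w ∧ p ∉ G.neighborFinset w' ∧
      q ∈ G.neighborFinset w' ∧ q ∉ G.neighborFinset w ∧ q ≠ w ∧
      G.neighborFinset w' = insert q ((G.neighborFinset w).erase p) := by
  obtain ⟨hne, hcom⟩ := mem_dezaB.mp h
  have hcom' : (G.neighborFinset w' ∩ G.neighborFinset w).card = b := hcom
  have hd1 : (G.neighborFinset w \ G.neighborFinset w').card = 1 := by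
    have := Finset.card_sdiff_add_card_inter (G.neighborFinset w) (G.neighborFinset w')
    rw [hreg w] at this
    rw [inter_comm] at hcom'
    omega
  have hd2 : (G.neighborFinset w' \ G.neighborFinset w).card = 1 := by
    have := Finset.card_sdiff_add_card_inter (G.neighborFinset w') (G.neighborFinset w)
    rw [hreg w'] at this
    omega
  obtain ⟨p, hp⟩ := card_eq_one.mp hd1
  obtain ⟨q, hq⟩ := card_eq_one.mp hd2
  have hpm : p ∈ G.neighborFinset w ∧ p ∉ G.neighborFinset w' := by
    have : p ∈ G.neighborFinset w \ G.neighborFinset w' := hp ▸ mem_singleton_self p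
    exact ⟨(mem_sdiff.mp this).1, (mem_sdiff.mp this).2⟩
  have hqm : q ∈ G.neighborFinset w' ∧ q ∉ G.neighborFinset w := by
    have : q ∈ G.neighborFinset w' \ G.neighborFinset w := hq ▸ mem_singleton_self q
    exact ⟨(mem_sdiff.mp this).1, (mem_sdiff.mp this).2⟩
  have hwn : w ∉ G.neighborFinset w' := fun hc => hnadj (nbr_comm.mp hc)
  refine ⟨p, q, hpm.1, hpm.2, hqm.1, hqm.2, fun hc => hwn (hc ▸ hqm.1), ?_⟩
  ext u
  simp only [mem_insert, mem_erase]
  constructor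
  · intro hu
    by_cases hux : u ∈ G.neighborFinset w
    · right
      refine ⟨fun he => ?_, hux⟩
      subst he; exact hpm.2 hu
    · left
      have : u ∈ G.neighborFinset w' \ G.neighborFinset w := mem_sdiff.mpr ⟨hu, hux⟩
      rw [hq] at this; exact mem_singleton.mp this
  · rintro (rfl | ⟨hup, hu⟩)
    · exact hqm.1
    · by_contra hc
      have : u ∈ G.neighborFinset w \ G.neighborFinset w' := mem_sdiff.mpr ⟨hu, hc⟩
      rw [hp] at this; exact hup (mem_singleton.mp this)


/-- the impossible "bad pair" configuration -/
lemma bad_config (hk3 : 3 ≤ k) {w t1 t2 p1 q1 p2 q2 : V}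
    (ht1 : t1 ∉ G.neighborFinset w) (ht2 : t2 ∉ G.neighborFinset w)
    (ht1w : t1 ≠ w) (ht2w : t2 ≠ w)
    (hp1 : p1 ∈ G.neighborFinset w) (hq1 : q1 ∉ G.neighborFinset w)
    (hp2 : p2 ∈ G.neighborFinset w) (hq2 : q2 ∉ G.neighborFinset w)
    (h1 : G.neighborFinset t1 = insert q1 ((G.neighborFinset w).erase p1))
    (h2 : G.neighborFinset t2 = insert q2 ((G.neighborFinset w).erase p2))
    (hpp : p1 ≠ p2) (hqq : q1 ≠ q2) : False := by
  have ht12 : t1 ≠ t2 := by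
    intro he
    apply hpp
    have h12 : G.neighborFinset t1 = G.neighborFinset t2 := he ▸ rfl
    rw [h1, h2] at h12
    have : p2 ∈ insert q2 ((G.neighborFinset w).erase p2) := by
      rw [← h12]; exact mem_insert_of_mem (mem_erase.mpr ⟨hpp.symm, hp2⟩)
    rcases mem_insert.mp this with he2 | he2
    · exact absurd (he2 ▸ hp2) hq2
    · exact absurd (mem_erase.mp he2).1 (by simp)
  have hint : G.neighborFinset t1 ∩ G.neighborFinset t2
      = ((G.neighborFinset w).erase p1).erase p2 := by
    ext u
    rw [mem_inter, h1, h2]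
    simp only [mem_insert, mem_erase]
    constructor
    · rintro ⟨hq1' | ⟨hu1, hu⟩, hq2' | ⟨hu2, hu'⟩⟩
      · exact absurd rfl (by subst hq1' hq2'; exact hqq)
      · exact absurd (hq1' ▸ hu') hq1
      · exact absurd (hq2' ▸ hu) hq2
      · exact ⟨hu2, hu1, hu⟩
    · rintro ⟨hu2, hu1, hu⟩
      exact ⟨Or.inr ⟨hu1, hu⟩, Or.inr ⟨hu2, hu⟩⟩
  have hcard12 : commonNbrs G t1 t2 = k - 2 := by
    unfold commonNbrs
    rw [hint, card_erase_of_mem (mem_erase.mpr ⟨hpp.symm, hp2⟩), card_erase_of_mem hp1, hreg]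
    omega
  have ha2 : a = k - 2 := by
    rcases hdich t1 t2 ht12 with h' | h' <;> omega
  have hne2 : (((G.neighborFinset w).erase p1).erase p2).Nonempty := by
    rw [← card_pos, card_erase_of_mem (mem_erase.mpr ⟨hpp.symm, hp2⟩),
      card_erase_of_mem hp1, hreg]
    omega
  obtain ⟨m, hm⟩ := hne2
  have hmw : m ∈ G.neighborFinset w := mem_of_mem_erase (mem_of_mem_erase hm)
  have hmt1 : m ∈ G.neighborFinset t1 := by
    rw [h1]; exact mem_insert_of_mem (mem_of_mem_erase hm)
  have hmt2 : m ∈ G.neighborFinset t2 := by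
    rw [h2]
    exact mem_insert_of_mem (mem_erase.mpr ⟨(mem_erase.mp hm).1,
      mem_of_mem_erase (mem_of_mem_erase hm)⟩)
  have hmne : m ≠ w := fun he => nbr_self w (he ▸ hmw)
  have hsub : G.neighborFinset m ∩ G.neighborFinset w ⊆
      (((G.neighborFinset m).erase w).erase t1).erase t2 := by
    intro u hu
    rw [mem_inter] at hu
    refine mem_erase.mpr ⟨fun he => ht2 (he ▸ hu.2), mem_erase.mpr
      ⟨fun he => ht1 (he ▸ hu.2), mem_erase.mpr ⟨fun he => nbr_self w (he ▸ hu.2), hu.1⟩⟩⟩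
  have hwm : w ∈ G.neighborFinset m := nbr_comm.mp hmw
  have ht1m : t1 ∈ G.neighborFinset m := nbr_comm.mp hmt1
  have ht2m : t2 ∈ G.neighborFinset m := nbr_comm.mp hmt2
  have hm1 : t1 ∈ (G.neighborFinset m).erase w := mem_erase.mpr ⟨ht1w, ht1m⟩
  have hm2 : t2 ∈ ((G.neighborFinset m).erase w).erase t1 :=
    mem_erase.mpr ⟨ht12.symm, mem_erase.mpr ⟨ht2w, ht2m⟩⟩
  have hcards : ((((G.neighborFinset m).erase w).erase t1).erase t2).card = k - 3 := by
    rw [card_erase_of_mem hm2, card_erase_of_mem hm1, card_erase_of_mem hwm, hreg]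
    omega
  have hle : commonNbrs G m w ≤ k - 3 := by
    unfold commonNbrs; rw [← hcards]; exact card_le_card hsub
  rcases hdich m w hmne with h' | h' <;> omega

/-- transitivity of the b-relation at a vertex of degree ≥ 3 -/
lemma trans_at (hk3 : 3 ≤ k) {w w' w'' : V}
    (h' : w' ∈ dezaB G b w) (h'' : w'' ∈ dezaB G b w) (hne : w' ≠ w'') :
    w'' ∈ dezaB G b w' := by
  have key : ∀ u u' : V, u ∈ dezaB G b w → u' ∈ dezaB G b w → u ≠ u' →
      u ∈ G.neighborFinset w → commonNbrs G u u' = b := by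
    intro u u' hu hu' hneu hadj
    obtain ⟨hneu'w, _⟩ := mem_dezaB.mp hu'
    have hform : G.neighborFinset u = insert w ((G.neighborFinset w).erase u) :=
      closed_eq hreg hdich hb hab hu hadj
    by_cases hadj' : u' ∈ G.neighborFinset w
    · have hform' : G.neighborFinset u' = insert w ((G.neighborFinset w).erase u') :=
        closed_eq hreg hdich hb hab hu' hadj'
      have hint : G.neighborFinset u ∩ G.neighborFinset u' =
          insert w (((G.neighborFinset w).erase u).erase u') := by
        ext m
        rw [mem_inter, hform, hform']
        simp only [mem_insert, mem_erase]
        constructor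
        · rintro ⟨rfl | ⟨h1, h2⟩, hB⟩
          · exact Or.inl rfl
          · rcases hB with rfl | ⟨h3, h4⟩
            · exact Or.inl rfl
            · exact Or.inr ⟨h3, h1, h2⟩
        · rintro (rfl | ⟨h1, h2, h3⟩)
          · exact ⟨Or.inl rfl, Or.inl rfl⟩
          · exact ⟨Or.inr ⟨h2, h3⟩, Or.inr ⟨h1, h3⟩⟩
      unfold commonNbrs
      rw [hint, card_insert_of_notMem, card_erase_of_mem, card_erase_of_mem hadj, hreg]
      · omega
      · exact mem_erase.mpr ⟨hneu.symm, hadj'⟩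
      · intro hc
        exact nbr_self w (mem_of_mem_erase (mem_of_mem_erase hc))
    · obtain ⟨p, q, hp, hpn, hq, hqn, hqw, hform'⟩ :=
        swap_pair hreg hdich hb hab hu' hadj'
      have hu'nu : u' ∉ G.neighborFinset u := by
        rw [hform]
        intro hc
        rcases mem_insert.mp hc with rfl | hc
        · exact hneu'w rfl
        · exact hadj' (mem_of_mem_erase hc)
      have hpu : p = u := by
        have hunu' : u ∉ G.neighborFinset u' := fun hc => hu'nu (nbr_comm.mp hc)
        rw [hform'] at hunu'
        by_contra hpune
        apply hunu'
        exact mem_insert_of_mem (mem_erase.mpr ⟨fun he => hpune he.symm, hadj⟩)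
      rw [hpu] at hform'
      have hint : G.neighborFinset u ∩ G.neighborFinset u' = (G.neighborFinset w).erase u := by
        ext m
        rw [mem_inter, hform, hform']
        simp only [mem_insert, mem_erase]
        constructor
        · rintro ⟨h1, h2⟩
          rcases h1 with he1 | ⟨hne1, hmem1⟩
          · rcases h2 with he2 | ⟨_, hmem2⟩
            · exact absurd (he1.symm.trans he2) (fun hh => hqw hh.symm)
            · exact absurd (he1 ▸ hmem2) (nbr_self _)
          · rcases h2 with he2 | _
            · exact absurd (he2 ▸ hmem1) hqn
            · exact ⟨hne1, hmem1⟩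
        · rintro ⟨h1, h2⟩
          exact ⟨Or.inr ⟨h1, h2⟩, Or.inr ⟨h1, h2⟩⟩
      unfold commonNbrs
      rw [hint, card_erase_of_mem hadj, hreg]
      omega
  obtain ⟨hne', hcom'⟩ := mem_dezaB.mp h'
  obtain ⟨hne'', hcom''⟩ := mem_dezaB.mp h''
  by_cases hadj' : w' ∈ G.neighborFinset w
  · have := key w' w'' h' h'' hne hadj'
    exact mem_dezaB.mpr ⟨hne.symm, (common_comm w'' w').trans this⟩
  · by_cases hadj'' : w'' ∈ G.neighborFinset w
    · have := key w'' w' h'' h' hne.symm hadj''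
      exact mem_dezaB.mpr ⟨hne.symm, this⟩
    · obtain ⟨p1, q1, hp1, hp1n, hq1, hq1n, hq1w, hf1⟩ :=
        swap_pair hreg hdich hb hab h' hadj'
      obtain ⟨p2, q2, hp2, hp2n, hq2, hq2n, hq2w, hf2⟩ :=
        swap_pair hreg hdich hb hab h'' hadj''
      by_cases hpp : p1 = p2
      · subst hpp
        have hqq : q1 ≠ q2 := by
          intro he
          subst he
          exact nbhd_inj hreg hdich hb hab hne (hf1.trans hf2.symm)
        have hint : G.neighborFinset w' ∩ G.neighborFinset w''
            = (G.neighborFinset w).erase p1 := by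
          ext m
          rw [mem_inter, hf1, hf2]
          simp only [mem_insert, mem_erase]
          constructor
          · rintro ⟨rfl | ⟨h1, h2⟩, hB⟩
            · rcases hB with rfl | ⟨h3, h4⟩
              · exact absurd rfl hqq
              · exact absurd h4 hq1n
            · exact ⟨h1, h2⟩
          · rintro ⟨h1, h2⟩
            exact ⟨Or.inr ⟨h1, h2⟩, Or.inr ⟨h1, h2⟩⟩
        refine mem_dezaB.mpr ⟨hne.symm, ?_⟩
        rw [common_comm]
        unfold commonNbrs
        rw [hint, card_erase_of_mem hp1, hreg]
        omega
      · by_cases hqq : q1 = q2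
        · subst hqq
          have hint : G.neighborFinset w' ∩ G.neighborFinset w''
              = insert q1 (((G.neighborFinset w).erase p1).erase p2) := by
            ext m
            rw [mem_inter, hf1, hf2]
            simp only [mem_insert, mem_erase]
            constructor
            · rintro ⟨rfl | ⟨h1, h2⟩, hB⟩
              · exact Or.inl rfl
              · rcases hB with rfl | ⟨h3, h4⟩
                · exact absurd h2 hq1n
                · exact Or.inr ⟨h3, h1, h2⟩
            · rintro (rfl | ⟨h1, h2, h3⟩)
              · exact ⟨Or.inl rfl, Or.inl rfl⟩
              · exact ⟨Or.inr ⟨h2, h3⟩, Or.inr ⟨h1, h3⟩⟩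
          refine mem_dezaB.mpr ⟨hne.symm, ?_⟩
          rw [common_comm]
          unfold commonNbrs
          rw [hint, card_insert_of_notMem, card_erase_of_mem, card_erase_of_mem hp1, hreg]
          · omega
          · exact mem_erase.mpr ⟨fun he => hpp he.symm, hp2⟩
          · intro hc
            exact hq1n (mem_of_mem_erase (mem_of_mem_erase hc))
        · exact absurd (bad_config hreg hdich hb hab hk3 hadj' hadj'' hne' hne''
            hp1 hq1n hp2 hq2n hf1 hf2 hpp hqq) (by tauto)


section Master

lemma S_mem_not_K {K S : Finset V}
    (hM3 : ∀ w : V, w ∈ S ↔ ∀ m ∈ K, m ∈ G.neighborFinset w)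
    {w : V} (hw : w ∈ S) : w ∉ K :=
  fun hK => nbr_self w ((hM3 w).mp hw w hK)

lemma B_not_K {K S : Finset V}
    (hM1 : ∀ u ∈ K, dezaB G b u = K.erase u)
    (hM3 : ∀ w : V, w ∈ S ↔ ∀ m ∈ K, m ∈ G.neighborFinset w)
    {w w' : V} (hw : w ∈ S) (hw' : w' ∈ dezaB G b w) : w' ∉ K := by
  intro hK
  have h1 : w ∈ dezaB G b w' := dezaB_symm hw'
  rw [hM1 w' hK] at h1
  exact S_mem_not_K hreg hdich hb hab hM3 hw (mem_of_mem_erase h1)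

lemma hk3_of_S {K S : Finset V}
    (hM2 : K.card = β + 1) (hβ2 : 2 ≤ β)
    (hM3 : ∀ w : V, w ∈ S ↔ ∀ m ∈ K, m ∈ G.neighborFinset w)
    {w : V} (hw : w ∈ S) : 3 ≤ k := by
  have h1 : K.card ≤ (G.neighborFinset w).card :=
    card_le_card (fun m hm => (hM3 w).mp hw m hm)
  rw [hreg, hM2] at h1
  omega

lemma M4_adj {K S : Finset V}
    (hM1 : ∀ u ∈ K, dezaB G b u = K.erase u)
    (hM3 : ∀ w : V, w ∈ S ↔ ∀ m ∈ K, m ∈ G.neighborFinset w)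
    {w w' : V} (hw : w ∈ S) (hw' : w' ∈ dezaB G b w)
    (hadj : w' ∈ G.neighborFinset w) : w' ∈ S := by
  have hform := closed_eq hreg hdich hb hab hw' hadj
  rw [hM3]
  intro m hm
  rw [hform]
  exact mem_insert_of_mem (mem_erase.mpr
    ⟨fun he => B_not_K hreg hdich hb hab hM1 hM3 hw hw' (he ▸ hm), (hM3 w).mp hw m hm⟩)

lemma M4_nonadj_gen {K S : Finset V}
    (hM3 : ∀ w : V, w ∈ S ↔ ∀ m ∈ K, m ∈ G.neighborFinset w)
    {w w' p q : V} (hw : w ∈ S) (hpK : p ∉ K)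
    (hform : G.neighborFinset w' = insert q ((G.neighborFinset w).erase p)) : w' ∈ S := by
  rw [hM3]
  intro m hm
  rw [hform]
  exact mem_insert_of_mem (mem_erase.mpr ⟨fun he => hpK (he ▸ hm), (hM3 w).mp hw m hm⟩)

lemma master_dvd {K S : Finset V}
    (hβc : ∀ v : V, (dezaB G b v).card = β) (hβ2 : 2 ≤ β)
    (hM2 : K.card = β + 1)
    (hM3 : ∀ w : V, w ∈ S ↔ ∀ m ∈ K, m ∈ G.neighborFinset w)
    (hM4 : ∀ w ∈ S, ∀ w' ∈ dezaB G b w, w' ∈ S) : (β + 1) ∣ S.card := by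
  classical
  set cl : V → Finset V := fun w => insert w (dezaB G b w) with hcl
  have hclcard : ∀ w : V, (cl w).card = β + 1 := by
    intro w
    show (insert w (dezaB G b w)).card = β + 1
    rw [card_insert_of_notMem (not_mem_dezaB_self w), hβc w]
  have hclS : ∀ w ∈ S, cl w ⊆ S := by
    intro w hw u hu
    rcases mem_insert.mp hu with rfl | huB
    · exact hw
    · exact hM4 w hw u huB
  have hcleq : ∀ w ∈ S, ∀ w' ∈ cl w, cl w' = cl w := by
    intro w hw w' hw'
    rcases mem_insert.mp hw' with rfl | hw'B
    · rfl
    · have hk3 : 3 ≤ k := hk3_of_S hreg hdich hb hab hM2 hβ2 hM3 hw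
      have hBw' : insert w ((dezaB G b w).erase w') = dezaB G b w' := by
        apply eq_of_subset_of_card_le
        · intro u hu
          rcases mem_insert.mp hu with rfl | huB
          · exact dezaB_symm hw'B
          · exact trans_at hreg hdich hb hab hk3 hw'B (mem_of_mem_erase huB)
              (fun he => (mem_erase.mp huB).1 he.symm)
        · rw [hβc, card_insert_of_notMem
            (fun hc => not_mem_dezaB_self w (mem_of_mem_erase hc)),
            card_erase_of_mem hw'B, hβc]
          omega
      show insert w' (dezaB G b w') = insert w (dezaB G b w)
      rw [← hBw', Finset.insert_comm, Finset.insert_erase hw'B]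
  set P : Finset (Finset V) := S.image cl with hP
  have hdisj : ∀ C ∈ P, ∀ D ∈ P, C ≠ D → Disjoint ((fun C => C) C) ((fun C => C) D) := by
    intro C hC D hD hne
    rw [Finset.disjoint_left]
    intro u huC huD
    apply hne
    obtain ⟨w, hw, rfl⟩ := mem_image.mp hC
    obtain ⟨w', hw', rfl⟩ := mem_image.mp hD
    rw [← hcleq w hw u huC, ← hcleq w' hw' u huD]
  have hcover : S = P.biUnion (fun C => C) := by
    ext u
    simp only [mem_biUnion, hP, mem_image]
    constructor
    · intro hu
      exact ⟨cl u, ⟨u, hu, rfl⟩, mem_insert_self u _⟩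
    · rintro ⟨C, ⟨w, hw, rfl⟩, huC⟩
      exact hclS w hw huC
  rw [hcover, card_biUnion hdisj]
  have hconst : ∀ C ∈ P, ((fun C => C) C : Finset V).card = β + 1 := by
    intro C hC
    obtain ⟨w, _, rfl⟩ := mem_image.mp hC
    exact hclcard w
  rw [Finset.sum_congr rfl hconst, Finset.sum_const, smul_eq_mul]
  exact dvd_mul_left _ _

end Master

section SettingI

lemma settingI {K S : Finset V} {x : V}
    (hβc : ∀ v : V, (dezaB G b v).card = β) (hβ2 : 2 ≤ β)
    (hxK : x ∈ K) (hKcard : K.card = β + 1)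
    (hE : ∀ m ∈ K, ∃ e, e ∉ S ∧ G.neighborFinset m = insert e S) :
    (β + 1) ∣ S.card ∧ S.card + 1 = k := by
  obtain ⟨e0, he0, hx0⟩ := hE x hxK
  have hScard : S.card + 1 = k := by
    have := hreg x
    rw [hx0, card_insert_of_notMem he0] at this
    omega
  have hprs : ∀ m ∈ K, ∀ m' ∈ K, m ≠ m' →
      G.neighborFinset m ∩ G.neighborFinset m' = S := by
    intro m hm m' hm' hne
    obtain ⟨e, heS, hfm⟩ := hE m hm
    obtain ⟨e', heS', hfm'⟩ := hE m' hm'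
    have hee : e ≠ e' := by
      intro hc
      exact nbhd_inj hreg hdich hb hab hne (by rw [hfm, hfm', hc])
    ext u
    rw [mem_inter, hfm, hfm']
    simp only [mem_insert]
    constructor
    · rintro ⟨he1 | hu1, he2 | hu2⟩
      · exact absurd (he1.symm.trans he2) hee
      · exact hu2
      · exact hu1
      · exact hu1
    · intro hu
      exact ⟨Or.inr hu, Or.inr hu⟩
  have hM1 : ∀ u ∈ K, dezaB G b u = K.erase u := by
    intro u hu
    symm
    apply eq_of_subset_of_card_le
    · intro m' hm'
      obtain ⟨hne, hmK⟩ := mem_erase.mp hm'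
      refine mem_dezaB.mpr ⟨hne, ?_⟩
      have hc : commonNbrs G m' u = S.card := by
        unfold commonNbrs
        rw [hprs m' hmK u hu hne]
      omega
    · rw [hβc, card_erase_of_mem hu, hKcard]
      omega
  have hM3 : ∀ w : V, w ∈ S ↔ ∀ m ∈ K, m ∈ G.neighborFinset w := by
    intro w
    constructor
    · intro hw m hm
      obtain ⟨e, heS, hfm⟩ := hE m hm
      have : w ∈ G.neighborFinset m := by
        rw [hfm]; exact mem_insert_of_mem hw
      exact nbr_comm.mp this
    · intro h
      have h2 : 1 < K.card := by omega
      obtain ⟨m1, hm1, m2, hm2, hne⟩ := Finset.one_lt_card.mp h2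
      have hw1 : w ∈ G.neighborFinset m1 := nbr_comm.mp (h m1 hm1)
      have hw2 : w ∈ G.neighborFinset m2 := nbr_comm.mp (h m2 hm2)
      obtain ⟨e1, he1, hf1⟩ := hE m1 hm1
      obtain ⟨e2, he2, hf2⟩ := hE m2 hm2
      have hee : e1 ≠ e2 := by
        intro hc
        exact nbhd_inj hreg hdich hb hab hne (by rw [hf1, hf2, hc])
      rw [hf1] at hw1
      rw [hf2] at hw2
      rcases mem_insert.mp hw1 with rfl | hw1'
      · rcases mem_insert.mp hw2 with he | hw2'
        · exact absurd he hee
        · exact hw2'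
      · exact hw1'
  have hM4 : ∀ w ∈ S, ∀ w' ∈ dezaB G b w, w' ∈ S := by
    intro w hw w' hw'
    by_cases hadj : w' ∈ G.neighborFinset w
    · exact M4_adj hreg hdich hb hab hM1 hM3 hw hw' hadj
    · obtain ⟨p, q, hp, hpn, hq, hqn, hqw, hform⟩ :=
        swap_pair hreg hdich hb hab hw' hadj
      by_cases hpK : p ∈ K
      · exfalso
        have h2 : 1 < (K.erase p).card := by
          rw [card_erase_of_mem hpK, hKcard]
          omega
        obtain ⟨m1, hm1, m2, hm2, hne⟩ := Finset.one_lt_card.mp h2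
        have hmem : ∀ m ∈ K.erase p, w' ∈ G.neighborFinset m := by
          intro m hm
          obtain ⟨hmp, hmK⟩ := mem_erase.mp hm
          have h1 : m ∈ G.neighborFinset w' := by
            rw [hform]
            exact mem_insert_of_mem (mem_erase.mpr ⟨hmp, (hM3 w).mp hw m hmK⟩)
          exact nbr_comm.mp h1
        have hw'S : w' ∈ S := by
          rw [← hprs m1 (mem_of_mem_erase hm1) m2 (mem_of_mem_erase hm2) hne]
          exact mem_inter.mpr ⟨hmem m1 hm1, hmem m2 hm2⟩
        exact hpn ((hM3 w').mp hw'S p hpK)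
      · exact M4_nonadj_gen hreg hdich hb hab hM3 hw hpK hform
  exact ⟨master_dvd hreg hdich hb hab hβc hβ2 hKcard hM3 hM4, hScard⟩

/-- Type A1 gives the divisibility β + 1 ∣ k - 1 -/
lemma typeA1_dvd (hβc : ∀ v : V, (dezaB G b v).card = β) (hβ2 : 2 ≤ β) {x y : V}
    (hA : dezaB G b x ∩ G.neighborFinset x = ∅)
    (hy : y ∈ G.neighborFinset x)
    (hyy : ∀ xi ∈ dezaB G b x, G.neighborFinset x \ G.neighborFinset xi = {y}) :
    ∃ c : ℕ, (β + 1) ∣ c ∧ c + 1 = k := by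
  set K : Finset V := insert x (dezaB G b x) with hK
  set S : Finset V := (G.neighborFinset x).erase y with hS
  have hxK : x ∈ K := mem_insert_self x _
  have hKcard : K.card = β + 1 := by
    rw [hK, card_insert_of_notMem (not_mem_dezaB_self x), hβc]
  have hE : ∀ m ∈ K, ∃ e, e ∉ S ∧ G.neighborFinset m = insert e S := by
    intro m hm
    rcases mem_insert.mp hm with rfl | hmB
    · exact ⟨y, notMem_erase y _, (insert_erase hy).symm⟩
    · have hmNx : m ∉ G.neighborFinset x := by
        intro hc
        exact notMem_empty m (hA ▸ mem_inter.mpr ⟨hmB, hc⟩)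
      have hyi : G.neighborFinset x \ G.neighborFinset m = {y} := hyy m hmB
      have hyNm : y ∉ G.neighborFinset m := by
        have : y ∈ G.neighborFinset x \ G.neighborFinset m := by
          rw [hyi]; exact mem_singleton_self y
        exact (mem_sdiff.mp this).2
      have hint : G.neighborFinset x ∩ G.neighborFinset m = S := by
        ext u
        rw [hS, mem_inter, mem_erase]
        constructor
        · rintro ⟨h1, h2⟩
          exact ⟨fun he => hyNm (he ▸ h2), h1⟩
        · rintro ⟨h1, h2⟩
          refine ⟨h2, ?_⟩
          by_contra hc
          have : u ∈ G.neighborFinset x \ G.neighborFinset m := mem_sdiff.mpr ⟨h2, hc⟩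
          rw [hyi] at this
          exact h1 (mem_singleton.mp this)
      have hd : (G.neighborFinset m \ G.neighborFinset x).card = 1 := by
        have h1 := Finset.card_sdiff_add_card_inter (G.neighborFinset m) (G.neighborFinset x)
        have h2 : (G.neighborFinset m ∩ G.neighborFinset x).card = S.card := by
          rw [inter_comm, hint]
        have h3 : S.card = k - 1 := by
          rw [hS, card_erase_of_mem hy, hreg]
        rw [hreg] at h1
        omega
      obtain ⟨q, hq⟩ := card_eq_one.mp hd
      have hqm : q ∈ G.neighborFinset m ∧ q ∉ G.neighborFinset x := by
        have : q ∈ G.neighborFinset m \ G.neighborFinset x := hq ▸ mem_singleton_self q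
        exact ⟨(mem_sdiff.mp this).1, (mem_sdiff.mp this).2⟩
      refine ⟨q, fun hc => hqm.2 (mem_of_mem_erase hc), ?_⟩
      ext u
      rw [mem_insert]
      constructor
      · intro hu
        by_cases hux : u ∈ G.neighborFinset x
        · right
          rw [← hint]
          exact mem_inter.mpr ⟨hux, hu⟩
        · left
          have : u ∈ G.neighborFinset m \ G.neighborFinset x := mem_sdiff.mpr ⟨hu, hux⟩
          rw [hq] at this
          exact mem_singleton.mp this
      · rintro (rfl | hu)
        · exact hqm.1
        · rw [← hint] at hu
          exact (mem_inter.mp hu).2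
  obtain ⟨hdvd, hcard⟩ := settingI hreg hdich hb hab hβc hβ2 hxK hKcard hE
  exact ⟨S.card, hdvd, hcard⟩

/-- Type C gives the divisibility β + 1 ∣ k - 1 -/
lemma typeC_dvd (hβc : ∀ v : V, (dezaB G b v).card = β) (hβ2 : 2 ≤ β) {x : V}
    (hC : (dezaB G b x ∩ G.neighborFinset x).card = 1) :
    ∃ c : ℕ, (β + 1) ∣ c ∧ c + 1 = k := by
  obtain ⟨u0, hu0⟩ := card_eq_one.mp hC
  have hu0m : u0 ∈ dezaB G b x ∧ u0 ∈ G.neighborFinset x := by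
    have : u0 ∈ dezaB G b x ∩ G.neighborFinset x := hu0 ▸ mem_singleton_self u0
    exact ⟨(mem_inter.mp this).1, (mem_inter.mp this).2⟩
  set K : Finset V := insert x (dezaB G b x) with hK
  set S : Finset V := (G.neighborFinset x).erase u0 with hS
  have hxK : x ∈ K := mem_insert_self x _
  have hKcard : K.card = β + 1 := by
    rw [hK, card_insert_of_notMem (not_mem_dezaB_self x), hβc]
  have hxS : x ∉ S := fun hc => nbr_self x (mem_of_mem_erase hc)
  have hE : ∀ m ∈ K, ∃ e, e ∉ S ∧ G.neighborFinset m = insert e S := by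
    intro m hm
    rcases mem_insert.mp hm with rfl | hmB
    · exact ⟨u0, notMem_erase u0 _, (insert_erase hu0m.2).symm⟩
    · by_cases hmu0 : m = u0
      · subst hmu0
        exact ⟨x, hxS, closed_eq hreg hdich hb hab hu0m.1 hu0m.2⟩
      · have hmNx : m ∉ G.neighborFinset x := by
          intro hc
          apply hmu0
          have : m ∈ dezaB G b x ∩ G.neighborFinset x := mem_inter.mpr ⟨hmB, hc⟩
          rw [hu0] at this
          exact mem_singleton.mp this
        obtain ⟨p, q, hp, hpn, hq, hqn, hqw, hform⟩ :=
          swap_pair hreg hdich hb hab hmB hmNx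
        have hu0Nm : u0 ∉ G.neighborFinset m := by
          intro hc
          have h1 : m ∈ G.neighborFinset u0 := nbr_comm.mp hc
          rw [closed_eq hreg hdich hb hab hu0m.1 hu0m.2] at h1
          rcases mem_insert.mp h1 with rfl | h1'
          · exact not_mem_dezaB_self _ hmB
          · exact hmNx (mem_of_mem_erase h1')
        have hpu0 : p = u0 := by
          by_contra hc
          apply hu0Nm
          rw [hform]
          exact mem_insert_of_mem (mem_erase.mpr ⟨fun he => hc he.symm, hu0m.2⟩)
        subst hpu0
        exact ⟨q, fun hc => hqn (mem_of_mem_erase hc), hform⟩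
  obtain ⟨hdvd, hcard⟩ := settingI hreg hdich hb hab hβc hβ2 hxK hKcard hE
  exact ⟨S.card, hdvd, hcard⟩

end SettingI

section SettingB

/-- Type B gives the divisibility β + 1 ∣ k - β -/
lemma typeB_dvd (hβc : ∀ v : V, (dezaB G b v).card = β) (hβ2 : 2 ≤ β) {x : V}
    (hBsub : dezaB G b x ⊆ G.neighborFinset x) :
    ∃ c : ℕ, (β + 1) ∣ c ∧ c + β = k := by
  set K : Finset V := insert x (dezaB G b x) with hK
  set Nc : Finset V := insert x (G.neighborFinset x) with hNc
  set S : Finset V := Nc \ K with hS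
  have hxK : x ∈ K := mem_insert_self x _
  have hKcard : K.card = β + 1 := by
    rw [hK, card_insert_of_notMem (not_mem_dezaB_self x), hβc]
  have hNccard : Nc.card = k + 1 := by
    rw [hNc, card_insert_of_notMem (nbr_self x), hreg]
  have hKNc : K ⊆ Nc := by
    intro m hm
    rcases mem_insert.mp hm with rfl | hmB
    · exact mem_insert_self m _
    · exact mem_insert_of_mem (hBsub hmB)
  have hNm : ∀ m ∈ K, G.neighborFinset m = Nc.erase m := by
    intro m hm
    rcases mem_insert.mp hm with rfl | hmB
    · rw [hNc, Finset.erase_insert (nbr_self m)]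
    · rw [closed_eq hreg hdich hb hab hmB (hBsub hmB), hNc,
        Finset.erase_insert_of_ne (mem_dezaB.mp hmB).1.symm]
  have hM1 : ∀ u ∈ K, dezaB G b u = K.erase u := by
    intro u hu
    symm
    apply eq_of_subset_of_card_le
    · intro m' hm'
      obtain ⟨hne, hmK⟩ := mem_erase.mp hm'
      refine mem_dezaB.mpr ⟨hne, ?_⟩
      have hint : G.neighborFinset m' ∩ G.neighborFinset u = (Nc.erase m').erase u := by
        rw [hNm m' hmK, hNm u hu]
        ext w
        simp only [mem_inter, mem_erase]
        tauto
      have hc : commonNbrs G m' u = k - 1 := by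
        unfold commonNbrs
        rw [hint, card_erase_of_mem, card_erase_of_mem (hKNc hmK), hNccard]
        · omega
        · exact mem_erase.mpr ⟨fun he => hne he.symm, hKNc hu⟩
      omega
    · rw [hβc, card_erase_of_mem hu, hKcard]
      omega
  have hM3 : ∀ w : V, w ∈ S ↔ ∀ m ∈ K, m ∈ G.neighborFinset w := by
    intro w
    constructor
    · intro hw m hm
      obtain ⟨hwNc, hwK⟩ := mem_sdiff.mp hw
      have : w ∈ G.neighborFinset m := by
        rw [hNm m hm]
        exact mem_erase.mpr ⟨fun he => hwK (he ▸ hm), hwNc⟩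
      exact nbr_comm.mp this
    · intro h
      have hwK : w ∉ K := by
        intro hc
        exact nbr_self w (h w hc)
      have hwNc : w ∈ Nc := by
        have h1 : w ∈ G.neighborFinset x := nbr_comm.mp (h x hxK)
        exact mem_insert_of_mem h1
      exact mem_sdiff.mpr ⟨hwNc, hwK⟩
  have hScard : S.card + β = k := by
    rw [hS, card_sdiff_of_subset hKNc, hNccard, hKcard]
    have := card_le_card hKNc
    rw [hNccard, hKcard] at this
    omega
  have hM4 : ∀ w ∈ S, ∀ w' ∈ dezaB G b w, w' ∈ S := by
    intro w hw w' hw'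
    by_cases hadj : w' ∈ G.neighborFinset w
    · exact M4_adj hreg hdich hb hab hM1 hM3 hw hw' hadj
    · obtain ⟨p, q, hp, hpn, hq, hqn, hqw, hform⟩ :=
        swap_pair hreg hdich hb hab hw' hadj
      by_cases hpK : p ∈ K
      · exfalso
        have hne : (K.erase p).Nonempty := by
          rw [← card_pos, card_erase_of_mem hpK, hKcard]
          omega
        obtain ⟨m1, hm1⟩ := hne
        obtain ⟨hm1p, hm1K⟩ := mem_erase.mp hm1
        have hw'm1 : w' ∈ G.neighborFinset m1 := by
          apply nbr_comm.mp
          rw [hform]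
          exact mem_insert_of_mem (mem_erase.mpr ⟨hm1p, (hM3 w).mp hw m1 hm1K⟩)
        rw [hNm m1 hm1K] at hw'm1
        have hw'S : w' ∈ S := by
          refine mem_sdiff.mpr ⟨mem_of_mem_erase hw'm1, ?_⟩
          exact B_not_K hreg hdich hb hab hM1 hM3 hw hw'
        exact hpn ((hM3 w').mp hw'S p hpK)
      · exact M4_nonadj_gen hreg hdich hb hab hM3 hw hpK hform
  exact ⟨S.card, master_dvd hreg hdich hb hab hβc hβ2 hKcard hM3 hM4, hScard⟩

end SettingB

section SettingA2

/-- Type A2 gives the divisibility β + 1 ∣ k - β -/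
lemma typeA2_dvd (hβc : ∀ v : V, (dezaB G b v).card = β) (hβ2 : 2 ≤ β) {x z : V}
    (hA : dezaB G b x ∩ G.neighborFinset x = ∅)
    (hz0 : z ∉ insert x (G.neighborFinset x))
    (hz : ∀ xi ∈ dezaB G b x, G.neighborFinset xi \ G.neighborFinset x = {z}) :
    ∃ c : ℕ, (β + 1) ∣ c ∧ c + β = k := by
  classical
  have hzNx : z ∉ G.neighborFinset x := fun hc => hz0 (mem_insert_of_mem hc)
  set K : Finset V := insert x (dezaB G b x) with hK
  set S : Finset V :=
    (G.neighborFinset x).filter (fun w => ∀ u ∈ dezaB G b x, w ∈ G.neighborFinset u) with hS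
  have hxK : x ∈ K := mem_insert_self x _
  have hKcard : K.card = β + 1 := by
    rw [hK, card_insert_of_notMem (not_mem_dezaB_self x), hβc]
  have hxiNx : ∀ xi ∈ dezaB G b x, xi ∉ G.neighborFinset x := by
    intro xi hxi hc
    exact notMem_empty xi (hA ▸ mem_inter.mpr ⟨hxi, hc⟩)
  -- per-member data
  have hyd : ∀ xi ∈ dezaB G b x, ∃ y, y ∈ G.neighborFinset x ∧ y ∉ G.neighborFinset xi ∧
      G.neighborFinset x \ G.neighborFinset xi = {y} ∧
      G.neighborFinset xi = insert z ((G.neighborFinset x).erase y) := by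
    intro xi hxi
    have hzxi := hz xi hxi
    have hzmem : z ∈ G.neighborFinset xi := by
      have : z ∈ G.neighborFinset xi \ G.neighborFinset x := hzxi ▸ mem_singleton_self z
      exact (mem_sdiff.mp this).1
    have hcnt1 : (G.neighborFinset xi \ G.neighborFinset x).card = 1 := by
      rw [hzxi]; exact card_singleton z
    have h1 := Finset.card_sdiff_add_card_inter (G.neighborFinset xi) (G.neighborFinset x)
    have h2 := Finset.card_sdiff_add_card_inter (G.neighborFinset x) (G.neighborFinset xi)
    rw [hreg] at h1 h2
    have h3 : (G.neighborFinset x ∩ G.neighborFinset xi).card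
        = (G.neighborFinset xi ∩ G.neighborFinset x).card := by rw [inter_comm]
    have hdc : (G.neighborFinset x \ G.neighborFinset xi).card = 1 := by omega
    obtain ⟨y, hy⟩ := card_eq_one.mp hdc
    have hymem : y ∈ G.neighborFinset x ∧ y ∉ G.neighborFinset xi := by
      have : y ∈ G.neighborFinset x \ G.neighborFinset xi := hy ▸ mem_singleton_self y
      exact ⟨(mem_sdiff.mp this).1, (mem_sdiff.mp this).2⟩
    refine ⟨y, hymem.1, hymem.2, hy, ?_⟩
    ext u
    rw [mem_insert, mem_erase]
    constructor
    · intro hu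
      by_cases hux : u ∈ G.neighborFinset x
      · exact Or.inr ⟨fun he => hymem.2 (he ▸ hu), hux⟩
      · left
        have : u ∈ G.neighborFinset xi \ G.neighborFinset x := mem_sdiff.mpr ⟨hu, hux⟩
        rw [hzxi] at this
        exact mem_singleton.mp this
    · rintro (rfl | ⟨huy, hux⟩)
      · exact hzmem
      · by_contra hc
        have : u ∈ G.neighborFinset x \ G.neighborFinset xi := mem_sdiff.mpr ⟨hux, hc⟩
        rw [hy] at this
        exact huy (mem_singleton.mp this)
  have hM1 : ∀ u ∈ K, dezaB G b u = K.erase u := by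
    intro u hu
    symm
    apply eq_of_subset_of_card_le
    · intro m' hm'
      obtain ⟨hne, hmK⟩ := mem_erase.mp hm'
      rcases mem_insert.mp hu with rfl | huB
      · rcases mem_insert.mp hmK with rfl | hmB
        · exact absurd rfl hne
        · exact hmB
      · rcases mem_insert.mp hmK with rfl | hmB
        · exact dezaB_symm huB
        · -- two B-members
          obtain ⟨yi, hyi1, hyi2, hyi3, hyi4⟩ := hyd u huB
          obtain ⟨yj, hyj1, hyj2, hyj3, hyj4⟩ := hyd m' hmB
          have hyy : yj ≠ yi := by
            intro he
            exact nbhd_inj hreg hdich hb hab hne (by rw [hyj4, hyi4, he])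
          have hint : G.neighborFinset m' ∩ G.neighborFinset u
              = insert z (((G.neighborFinset x).erase yj).erase yi) := by
            rw [hyj4, hyi4]
            ext w
            simp only [mem_inter, mem_insert, mem_erase]
            constructor
            · rintro ⟨h1 | ⟨h2, h3⟩, h4⟩
              · exact Or.inl h1
              · rcases h4 with h5 | ⟨h6, h7⟩
                · exact Or.inl h5
                · exact Or.inr ⟨h6, h2, h3⟩
            · rintro (rfl | ⟨h1, h2, h3⟩)
              · exact ⟨Or.inl rfl, Or.inl rfl⟩
              · exact ⟨Or.inr ⟨h2, h3⟩, Or.inr ⟨h1, h3⟩⟩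
          refine mem_dezaB.mpr ⟨hne, ?_⟩
          have hk2 : 2 ≤ k := by
            have h2 := Finset.one_lt_card.mpr ⟨yj, hyj1, yi, hyi1, hyy⟩
            rw [hreg] at h2
            omega
          have hc : commonNbrs G m' u = k - 1 := by
            unfold commonNbrs
            rw [hint, card_insert_of_notMem, card_erase_of_mem, card_erase_of_mem hyj1, hreg]
            · omega
            · exact mem_erase.mpr ⟨hyy.symm, hyi1⟩
            · intro hc
              exact hzNx (mem_of_mem_erase (mem_of_mem_erase hc))
          omega
    · rw [hβc, card_erase_of_mem hu, hKcard]
      omega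
  have hM3 : ∀ w : V, w ∈ S ↔ ∀ m ∈ K, m ∈ G.neighborFinset w := by
    intro w
    constructor
    · intro hw m hm
      obtain ⟨hwNx, hwB⟩ := mem_filter.mp hw
      rcases mem_insert.mp hm with rfl | hmB
      · exact nbr_comm.mp hwNx
      · exact nbr_comm.mp (hwB m hmB)
    · intro h
      refine mem_filter.mpr ⟨nbr_comm.mp (h x hxK), ?_⟩
      intro u hu
      exact nbr_comm.mp (h u (mem_insert_of_mem hu))
  have hYeq : G.neighborFinset x \ S
      = (dezaB G b x).biUnion (fun u => G.neighborFinset x \ G.neighborFinset u) := by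
    ext u
    simp only [mem_sdiff, mem_biUnion, hS, mem_filter, not_and, not_forall]
    constructor
    · rintro ⟨hux, hu2⟩
      obtain ⟨xi, hxi, hnxi⟩ := hu2 hux
      exact ⟨xi, hxi, hux, hnxi⟩
    · rintro ⟨xi, hxi, hux, hnxi⟩
      exact ⟨hux, fun _ => ⟨xi, hxi, hnxi⟩⟩
  have hYcard : (G.neighborFinset x \ S).card = β := by
    rw [hYeq, card_biUnion]
    · have hone : ∀ xi ∈ dezaB G b x,
          (G.neighborFinset x \ G.neighborFinset xi).card = 1 := by
        intro xi hxi
        obtain ⟨y, _, _, hy3, _⟩ := hyd xi hxi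
        rw [hy3]; exact card_singleton y
      rw [Finset.sum_congr rfl hone, Finset.sum_const, smul_eq_mul, mul_one, hβc]
    · intro xi hxi xj hxj hne
      obtain ⟨yi, _, _, hyi3, hyi4⟩ := hyd xi hxi
      obtain ⟨yj, _, _, hyj3, hyj4⟩ := hyd xj hxj
      rw [Function.onFun, hyi3, hyj3, Finset.disjoint_singleton]
      intro he
      exact nbhd_inj hreg hdich hb hab hne (by rw [hyi4, hyj4, he])
  have hSNx : S ⊆ G.neighborFinset x := filter_subset _ _
  have hScard : S.card + β = k := by
    have h1 := Finset.card_sdiff_add_card_eq_card hSNx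
    rw [hreg] at h1
    omega
  have hYchar : ∀ u ∈ G.neighborFinset x \ S, ∃ xi ∈ dezaB G b x,
      G.neighborFinset x \ G.neighborFinset xi = {u} := by
    intro u hu
    rw [hYeq, mem_biUnion] at hu
    obtain ⟨xi, hxi, humem⟩ := hu
    obtain ⟨y, _, _, hy3, _⟩ := hyd xi hxi
    rw [hy3] at humem
    exact ⟨xi, hxi, by rw [hy3, mem_singleton.mp humem]⟩
  -- the dagger lemma
  have hsw : ∀ s ∈ S, ∀ xi ∈ dezaB G b x, ∀ y : V,
      G.neighborFinset x \ G.neighborFinset xi = {y} →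
      (y ∈ G.neighborFinset s ↔ z ∈ G.neighborFinset s) := by
    intro s hs xi hxi y hychar
    obtain ⟨y', _, _, hy'3, hy'4⟩ := hyd xi hxi
    have hyy' : y' = y := by
      have := hy'3.symm.trans hychar
      exact Finset.singleton_injective this
    rw [hyy'] at hy'4
    have hsK : s ∉ K := S_mem_not_K hreg hdich hb hab hM3 hs
    have hc1 : commonNbrs G s x = a := by
      apply common_eq_a hreg hdich hb hab (fun he => hsK (by rw [he]; exact hxK))
      rw [hM1 x hxK]
      exact fun hc => hsK (mem_of_mem_erase hc)
    have hc2 : commonNbrs G s xi = a := by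
      apply common_eq_a hreg hdich hb hab
        (fun he => hsK (by rw [he]; exact mem_insert_of_mem hxi))
      rw [hM1 xi (mem_insert_of_mem hxi)]
      exact fun hc => hsK (mem_of_mem_erase hc)
    have hyNx : y ∈ G.neighborFinset x := by
      have : y ∈ G.neighborFinset x \ G.neighborFinset xi := hychar ▸ mem_singleton_self y
      exact (mem_sdiff.mp this).1
    have hc1' : (G.neighborFinset s ∩ G.neighborFinset x).card = a := hc1
    by_cases hzs : z ∈ G.neighborFinset s
    · by_cases hys : y ∈ G.neighborFinset s
      · exact ⟨fun _ => hzs, fun _ => hys⟩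
      · exfalso
        have hint : G.neighborFinset s ∩ G.neighborFinset xi
            = insert z (G.neighborFinset s ∩ G.neighborFinset x) := by
          rw [hy'4]
          ext u
          simp only [mem_inter, mem_insert, mem_erase]
          constructor
          · rintro ⟨h1, rfl | ⟨h2, h3⟩⟩
            · exact Or.inl rfl
            · exact Or.inr ⟨h1, h3⟩
          · rintro (rfl | ⟨h1, h2⟩)
            · exact ⟨hzs, Or.inl rfl⟩
            · exact ⟨h1, Or.inr ⟨fun he => hys (he ▸ h1), h2⟩⟩
        have : commonNbrs G s xi = a + 1 := by
          unfold commonNbrs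
          rw [hint, card_insert_of_notMem (fun hc => hzNx (mem_inter.mp hc).2), hc1']
        omega
    · by_cases hys : y ∈ G.neighborFinset s
      · exfalso
        have hint : G.neighborFinset s ∩ G.neighborFinset xi
            = (G.neighborFinset s ∩ G.neighborFinset x).erase y := by
          rw [hy'4]
          ext u
          simp only [mem_inter, mem_insert, mem_erase]
          constructor
          · rintro ⟨h1, rfl | ⟨h2, h3⟩⟩
            · exact absurd h1 hzs
            · exact ⟨h2, h1, h3⟩
          · rintro ⟨h1, h2, h3⟩
            exact ⟨h2, Or.inr ⟨h1, h3⟩⟩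
        have hym : y ∈ G.neighborFinset s ∩ G.neighborFinset x := mem_inter.mpr ⟨hys, hyNx⟩
        have : commonNbrs G s xi = a - 1 := by
          unfold commonNbrs
          rw [hint, card_erase_of_mem hym, hc1']
        have hapos : 1 ≤ a := by
          rw [← hc1']
          exact card_pos.mpr ⟨y, hym⟩
        omega
      · exact ⟨fun hc => absurd hc hys, fun hc => absurd hc hzs⟩
  -- M4
  have hM4 : ∀ w ∈ S, ∀ w' ∈ dezaB G b w, w' ∈ S := by
    intro w hw w' hw'
    by_cases hadj : w' ∈ G.neighborFinset w
    · exact M4_adj hreg hdich hb hab hM1 hM3 hw hw' hadj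
    · obtain ⟨p, q, hp, hpn, hq, hqn, hqw, hform⟩ :=
        swap_pair hreg hdich hb hab hw' hadj
      by_cases hpK : p ∈ K
      swap
      · exact M4_nonadj_gen hreg hdich hb hab hM3 hw hpK hform
      exfalso
      have hwK : w ∉ K := S_mem_not_K hreg hdich hb hab hM3 hw
      obtain ⟨hwNx, hwB⟩ := mem_filter.mp hw
      have hw'S : w' ∉ S := fun hc => hpn ((hM3 w').mp hc p hpK)
      -- w' = z or w' ∈ N x \ S
      have hw'T : w' = z ∨ w' ∈ G.neighborFinset x \ S := by
        have hKmem : ∀ m ∈ K, m ≠ p → w' ∈ G.neighborFinset m := by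
          intro m hm hmp
          apply nbr_comm.mp
          rw [hform]
          exact mem_insert_of_mem (mem_erase.mpr ⟨hmp, (hM3 w).mp hw m hm⟩)
        rcases mem_insert.mp hpK with hpx | hpB
        · have hBne : (dezaB G b x).Nonempty := by
            rw [← card_pos, hβc]; omega
          obtain ⟨xi0, hxi0⟩ := hBne
          have hxi0p : xi0 ≠ p := by
            intro he
            exact not_mem_dezaB_self x (by rwa [he, hpx] at hxi0)
          have hw'xi0 : w' ∈ G.neighborFinset xi0 :=
            hKmem xi0 (mem_insert_of_mem hxi0) hxi0p
          obtain ⟨y0, _, _, _, hf0⟩ := hyd xi0 hxi0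
          rw [hf0] at hw'xi0
          rcases mem_insert.mp hw'xi0 with he | hw''
          · exact Or.inl he
          · exact Or.inr (mem_sdiff.mpr ⟨mem_of_mem_erase hw'', hw'S⟩)
        · have hxp : x ≠ p := by
            intro he
            exact not_mem_dezaB_self x (by rwa [← he] at hpB)
          have hw'x : w' ∈ G.neighborFinset x := hKmem x hxK hxp
          exact Or.inr (mem_sdiff.mpr ⟨hw'x, hw'S⟩)
      -- nothing in T := insert z (N x \ S) is adjacent to w
      have hzw : z ∉ G.neighborFinset w := by
        rcases hw'T with he | hw'Y
        · exact he ▸ hadj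
        · obtain ⟨xi, hxi, hchar⟩ := hYchar w' hw'Y
          intro hc
          exact hadj ((hsw w hw xi hxi w' hchar).mpr hc)
      have hTw : ∀ u ∈ G.neighborFinset x \ S, u ∉ G.neighborFinset w := by
        intro u hu hc
        obtain ⟨xi, hxi, hchar⟩ := hYchar u hu
        exact hzw ((hsw w hw xi hxi u hchar).mp hc)
      -- N w ∩ N x ⊆ S
      have hWS : G.neighborFinset w ∩ G.neighborFinset x ⊆ S := by
        intro u hu
        obtain ⟨huw, hux⟩ := mem_inter.mp hu
        by_contra hc
        exact hTw u (mem_sdiff.mpr ⟨hux, hc⟩) huw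
      -- every element of T is adjacent to every s ∈ N w ∩ S
      have hst : ∀ s ∈ G.neighborFinset w ∩ S, ∀ t ∈ insert z (G.neighborFinset x \ S),
          t ∈ G.neighborFinset s := by
        intro s hs t ht
        obtain ⟨hsw', hsS⟩ := mem_inter.mp hs
        have hsp : s ≠ p := by
          intro he
          exact S_mem_not_K hreg hdich hb hab hM3 hsS (he ▸ hpK)
        have hw's : w' ∈ G.neighborFinset s := by
          apply nbr_comm.mp
          rw [hform]
          exact mem_insert_of_mem (mem_erase.mpr ⟨hsp, hsw'⟩)
        have hzs : z ∈ G.neighborFinset s := by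
          rcases hw'T with he | hw'Y
          · exact he ▸ hw's
          · obtain ⟨xi, hxi, hchar⟩ := hYchar w' hw'Y
            exact (hsw s hsS xi hxi w' hchar).mp hw's
        rcases mem_insert.mp ht with rfl | htY
        · exact hzs
        · obtain ⟨xj, hxj, hcharu⟩ := hYchar t htY
          exact (hsw s hsS xj hxj t hcharu).mpr hzs
      -- each element of T is in dezaB G b w
      have hTB : ∀ t ∈ insert z (G.neighborFinset x \ S), t ∈ dezaB G b w := by
        intro t ht
        have htw : t ∉ G.neighborFinset w := by
          rcases mem_insert.mp ht with rfl | htY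
          · exact hzw
          · exact hTw t htY
        have htne : t ≠ w := by
          rcases mem_insert.mp ht with rfl | htY
          · intro he
            exact hzNx (he ▸ hwNx)
          · intro he
            exact (mem_sdiff.mp htY).2 (he ▸ hw)
        -- find mt
        have hKt : ∃ mt ∈ K, ∀ m ∈ K.erase mt, m ∈ G.neighborFinset t := by
          rcases mem_insert.mp ht with rfl | htY
          · refine ⟨x, hxK, ?_⟩
            intro m hm
            obtain ⟨hmne, hmK⟩ := mem_erase.mp hm
            rcases mem_insert.mp hmK with rfl | hmB
            · exact absurd rfl hmne
            · obtain ⟨ym, _, _, _, hfm⟩ := hyd m hmB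
              apply nbr_comm.mp
              rw [hfm]
              exact mem_insert_self _ _
          · obtain ⟨xi, hxi, hchar⟩ := hYchar t htY
            refine ⟨xi, mem_insert_of_mem hxi, ?_⟩
            intro m hm
            obtain ⟨hmne, hmK⟩ := mem_erase.mp hm
            have htNx : t ∈ G.neighborFinset x := (mem_sdiff.mp htY).1
            rcases mem_insert.mp hmK with rfl | hmB
            · exact nbr_comm.mp htNx
            · obtain ⟨ym, _, _, hymchar, hfm⟩ := hyd m hmB
              have htym : t ≠ ym := by
                intro he
                apply nbhd_inj hreg hdich hb hab hmne
                obtain ⟨yi, _, _, hyichar, hfi⟩ := hyd xi hxi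
                have h1 : yi = t := Finset.singleton_injective (hyichar.symm.trans hchar)
                rw [hfm, hfi, h1, he]
              apply nbr_comm.mp
              rw [hfm]
              exact mem_insert_of_mem (mem_erase.mpr ⟨htym, htNx⟩)
        obtain ⟨mt, hmtK, hmtN⟩ := hKt
        have hsub : (G.neighborFinset w ∩ S) ∪ K.erase mt
            ⊆ G.neighborFinset w ∩ G.neighborFinset t := by
          intro u hu
          rcases mem_union.mp hu with hu1 | hu2
          · refine mem_inter.mpr ⟨(mem_inter.mp hu1).1, ?_⟩
            exact nbr_comm.mp (hst u hu1 t ht)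
          · refine mem_inter.mpr ⟨(hM3 w).mp hw u (mem_of_mem_erase hu2), ?_⟩
            exact hmtN u hu2
        have hdisj2 : Disjoint (G.neighborFinset w ∩ S) (K.erase mt) := by
          rw [Finset.disjoint_left]
          intro u hu1 hu2
          exact S_mem_not_K hreg hdich hb hab hM3 (mem_inter.mp hu1).2 (mem_of_mem_erase hu2)
        have hcardsub : (G.neighborFinset w ∩ S).card + β
            ≤ (G.neighborFinset w ∩ G.neighborFinset t).card := by
          have h1 := card_le_card hsub
          rw [card_union_of_disjoint hdisj2, card_erase_of_mem hmtK, hKcard] at h1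
          omega
        have hWx : G.neighborFinset w ∩ G.neighborFinset x = G.neighborFinset w ∩ S := by
          apply Finset.Subset.antisymm
          · intro u hu
            exact mem_inter.mpr ⟨(mem_inter.mp hu).1, hWS hu⟩
          · intro u hu
            exact mem_inter.mpr ⟨(mem_inter.mp hu).1, hSNx (mem_inter.mp hu).2⟩
        have hax : commonNbrs G w x = a := by
          apply common_eq_a hreg hdich hb hab (fun he => hwK (by rw [he]; exact hxK))
          rw [hM1 x hxK]
          exact fun hc => hwK (mem_of_mem_erase hc)
        have hax' : (G.neighborFinset w ∩ S).card = a := by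
          rw [← hWx]; exact hax
        rcases hdich t w htne with hbt | hat
        · exact mem_dezaB.mpr ⟨htne, hbt⟩
        · exfalso
          have : commonNbrs G t w = (G.neighborFinset w ∩ G.neighborFinset t).card := by
            unfold commonNbrs; rw [inter_comm]
          omega
      have hTcard : (insert z (G.neighborFinset x \ S)).card = β + 1 := by
        rw [card_insert_of_notMem (fun hc => hzNx (mem_sdiff.mp hc).1), hYcard]
      have hfin : β + 1 ≤ (dezaB G b w).card := by
        rw [← hTcard]
        exact card_le_card hTB
      rw [hβc] at hfin
      omega
  exact ⟨S.card, master_dvd hreg hdich hb hab hβc hβ2 hKcard hM3 hM4, hScard⟩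

end SettingA2

end Ctx

end Base


theorem stmt16 {V : Type u} [Fintype V] [DecidableEq V] (G : SimpleGraph V)
    [DecidableRel G.Adj] (n k b a β : ℕ)
    (hG : IsStrictlyDezaGraph G n k b a) (hk : k = b + 1)
    (hβ : ∀ v : V, 1 < (dezaB G b v).card)
    (hβc : ∀ v : V, (dezaB G b v).card = β) :
    ((∃ x : V, IsTypeA1 G b x ∨ IsTypeC G b x) →
      ((β : ℤ) + 1) ∣ ((k : ℤ) - 1)) ∧
    ((∃ x : V, IsTypeA2 G b x ∨ IsTypeB G b x) →
      ((β : ℤ) + 1) ∣ ((k : ℤ) - (β : ℤ))) := by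
  obtain ⟨⟨_, _, hreg', hab, hdich⟩, _⟩ := hG
  have hreg : ∀ v : V, (G.neighborFinset v).card = k := fun v => hreg' v
  have hb : b + 1 = k := hk.symm
  constructor
  · rintro ⟨x, hx⟩
    have hβ2 : 2 ≤ β := by
      have h1 := hβ x
      rw [hβc x] at h1
      omega
    have hgoal : ∃ c : ℕ, (β + 1) ∣ c ∧ c + 1 = k := by
      rcases hx with ⟨hA, y, hy, hyy⟩ | hC
      · exact typeA1_dvd hreg hdich hb hab hβc hβ2 hA hy hyy
      · exact typeC_dvd hreg hdich hb hab hβc hβ2 hC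
    obtain ⟨c, hdvd, hcard⟩ := hgoal
    have hdvd' : ((β : ℤ) + 1) ∣ (c : ℤ) := by
      have := Int.natCast_dvd_natCast.mpr hdvd
      push_cast at this
      exact this
    have h2 : (k : ℤ) - 1 = (c : ℤ) := by omega
    rw [h2]
    exact hdvd'
  · rintro ⟨x, hx⟩
    have hβ2 : 2 ≤ β := by
      have h1 := hβ x
      rw [hβc x] at h1
      omega
    have hgoal : ∃ c : ℕ, (β + 1) ∣ c ∧ c + β = k := by
      rcases hx with ⟨hA, z, hz0, hz⟩ | hB
      · exact typeA2_dvd hreg hdich hb hab hβc hβ2 hA hz0 hz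
      · exact typeB_dvd hreg hdich hb hab hβc hβ2 hB
    obtain ⟨c, hdvd, hcard⟩ := hgoal
    have hdvd' : ((β : ℤ) + 1) ∣ (c : ℤ) := by
      have := Int.natCast_dvd_natCast.mpr hdvd
      push_cast at this
      exact this
    have h2 : (k : ℤ) - (β : ℤ) = (c : ℤ) := by omega
    rw [h2]
    exact hdvd'
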